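/- Let A_f be an m×n real matrix, A_c an m×n_c matrix, and suppose there exist matrices M (n_c×n) and E_I (m×n) with A_f = A_cM + E_I. Let Q_c R_c be a QR decomposition of A_c with Q_c having orthonormal columns, and let Â_f be a best rank-k spectral-norm approximation of Q_cQ_cᵀA_f. Then ‖A_f − Â_f‖₂ ≤ σ_{f,k+1} + ‖E_I‖₂, where σ_{f,k+1} is the (k+1)-th largest singular value of A_f. -/

import Mathlib

open Matrix
open scoped Matrix.Norms.L2Operator

lemma aux_norm_le_one {m : ℕ} (P : Matrix (Fin m) (Fin m) ℝ)
    (h : Pᴴ * P = P) : ‖P‖ ≤ 1 := by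
  have h1 : ‖P‖ * ‖P‖ = ‖P‖ := by
    rw [← Matrix.l2_opNorm_conjTranspose_mul_self, h]
  nlinarith [norm_nonneg P]

/-- SPC-SVD error bound: if `A_f = A_c M + E_I`, `A_c = Q_c R_c` with `Q_c` having
orthonormal columns, and `Â_f` is a best rank-`k` spectral-norm approximation of
`Q_cQ_cᵀA_f`, then `‖A_f - Â_f‖ ≤ σ_{f,k+1} + ‖E_I‖`, where `σ_{f,k+1}` is the
spectral-norm distance of `A_f` to the rank-`k` matrices (Eckart–Young). -/
theorem stmt17 {m n nc r k : ℕ}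
    (A_f : Matrix (Fin m) (Fin n) ℝ) (A_c : Matrix (Fin m) (Fin nc) ℝ)
    (M : Matrix (Fin nc) (Fin n) ℝ) (E_I : Matrix (Fin m) (Fin n) ℝ)
    (hAf : A_f = A_c * M + E_I)
    (Q_c : Matrix (Fin m) (Fin r) ℝ) (R_c : Matrix (Fin r) (Fin nc) ℝ)
    (hQ : Q_cᵀ * Q_c = 1) (hQR : A_c = Q_c * R_c)
    (Ahat : Matrix (Fin m) (Fin n) ℝ)
    (hrank : Ahat.rank ≤ k)
    (hbest : ∀ X : Matrix (Fin m) (Fin n) ℝ, X.rank ≤ k →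
      ‖Q_c * Q_cᵀ * A_f - Ahat‖ ≤ ‖Q_c * Q_cᵀ * A_f - X‖)
    (σ : ℝ)
    (hσ : σ = sInf {c : ℝ | ∃ X : Matrix (Fin m) (Fin n) ℝ, X.rank ≤ k ∧ ‖A_f - X‖ = c}) :
    ‖A_f - Ahat‖ ≤ σ + ‖E_I‖ := by
  set P : Matrix (Fin m) (Fin m) ℝ := Q_c * Q_cᵀ with hP
  have hconj : ∀ {a b : ℕ} (A : Matrix (Fin a) (Fin b) ℝ), Aᴴ = Aᵀ := by
    intro a b A; ext i j; simp [Matrix.conjTranspose_apply]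
  have hPt : Pᵀ = P := by
    rw [hP, Matrix.transpose_mul, Matrix.transpose_transpose]
  have hPP : P * P = P := by
    rw [hP]; rw [Matrix.mul_assoc, ← Matrix.mul_assoc Q_cᵀ, hQ, Matrix.one_mul]
  have hPnorm : ‖P‖ ≤ 1 := aux_norm_le_one P (by rw [hconj, hPt, hPP])
  have hIPnorm : ‖(1 : Matrix (Fin m) (Fin m) ℝ) - P‖ ≤ 1 := by
    apply aux_norm_le_one
    rw [hconj]
    simp only [Matrix.transpose_sub, Matrix.transpose_one, hPt, Matrix.sub_mul,
      Matrix.mul_sub, Matrix.one_mul, Matrix.mul_one, hPP]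
    abel
  -- (1 - P) * A_f = (1 - P) * E_I
  have hPAc : P * A_c = A_c := by
    rw [hQR, hP, Matrix.mul_assoc, ← Matrix.mul_assoc Q_cᵀ, hQ, Matrix.one_mul]
  have key1 : A_f - P * A_f = ((1 : Matrix (Fin m) (Fin m) ℝ) - P) * E_I := by
    rw [hAf]
    rw [Matrix.sub_mul, Matrix.one_mul, Matrix.mul_add, ← Matrix.mul_assoc, hPAc]
    abel
  have h1 : ‖A_f - P * A_f‖ ≤ ‖E_I‖ := by
    rw [key1]
    calc ‖((1 : Matrix (Fin m) (Fin m) ℝ) - P) * E_I‖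
        ≤ ‖(1 : Matrix (Fin m) (Fin m) ℝ) - P‖ * ‖E_I‖ := Matrix.l2_opNorm_mul _ _
      _ ≤ 1 * ‖E_I‖ := by
          exact mul_le_mul_of_nonneg_right hIPnorm (norm_nonneg _)
      _ = ‖E_I‖ := one_mul _
  -- main bound: for all X of rank ≤ k
  have main : ∀ X : Matrix (Fin m) (Fin n) ℝ, X.rank ≤ k →
      ‖A_f - Ahat‖ ≤ ‖A_f - X‖ + ‖E_I‖ := by
    intro X hX
    have hPX : (P * X).rank ≤ k := le_trans (Matrix.rank_mul_le_right _ _) hX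
    have h2 : ‖P * A_f - Ahat‖ ≤ ‖A_f - X‖ := by
      calc ‖P * A_f - Ahat‖ ≤ ‖P * A_f - P * X‖ := hbest (P * X) hPX
        _ = ‖P * (A_f - X)‖ := by rw [Matrix.mul_sub]
        _ ≤ ‖P‖ * ‖A_f - X‖ := Matrix.l2_opNorm_mul _ _
        _ ≤ 1 * ‖A_f - X‖ := mul_le_mul_of_nonneg_right hPnorm (norm_nonneg _)
        _ = ‖A_f - X‖ := one_mul _
    calc ‖A_f - Ahat‖ ≤ ‖A_f - P * A_f‖ + ‖P * A_f - Ahat‖ :=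
          norm_sub_le_norm_sub_add_norm_sub _ _ _
      _ ≤ ‖E_I‖ + ‖A_f - X‖ := add_le_add h1 h2
      _ = ‖A_f - X‖ + ‖E_I‖ := add_comm _ _
  -- conclude via sInf
  have hle : ‖A_f - Ahat‖ - ‖E_I‖ ≤ σ := by
    rw [hσ]
    apply le_csInf
    · exact ⟨‖A_f - 0‖, 0, by simp [Matrix.rank_zero], rfl⟩
    · rintro c ⟨X, hX, rfl⟩
      linarith [main X hX]
  linarith
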